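/- Let g₁ : ℝ → ℝ be continuous and not affine (not of the form t ↦ a·t + b), and let g₂(t) = 1 - t/2. Let S be the smallest class of functions ℝ → ℝ containing g₁ and g₂ and closed under pointwise addition and composition. Then for every compact K ⊂ ℝ, every continuous f : K → ℝ, and every ε > 0, there exists F ∈ S with sup_{x ∈ K} |f(x) - F(x)| < ε. -/

import Mathlib

namespace S12

noncomputable section

def aff (a b : ℝ) : ℝ → ℝ := fun t => a * t + b

theorem aff_comp (a b c d : ℝ) : aff a b ∘ aff c d = aff (a*c) (a*d+b) := by
  funext t; simp only [aff, Function.comp_apply]; ring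

theorem aff_add (a b c d : ℝ) : (aff a b) + (aff c d) = aff (a+c) (b+d) := by
  funext t; simp only [aff, Pi.add_apply]; ring

structure Good (S : Set (ℝ → ℝ)) : Prop where
  h2 : aff (-(1/2)) 1 ∈ S
  hadd : ∀ f ∈ S, ∀ h ∈ S, (f + h) ∈ S
  hcomp : ∀ f ∈ S, ∀ h ∈ S, (f ∘ h) ∈ S
  hcont : ∀ f ∈ S, Continuous f

variable {S : Set (ℝ → ℝ)}

theorem Good.comp (G : Good S) {a b c d : ℝ} (h : aff a b ∈ S) (h' : aff c d ∈ S) :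
    aff (a*c) (a*d+b) ∈ S := by
  rw [← aff_comp]; exact G.hcomp _ h _ h'

theorem Good.addm (G : Good S) {a b c d : ℝ} (h : aff a b ∈ S) (h' : aff c d ∈ S) :
    aff (a+c) (b+d) ∈ S := by
  rw [← aff_add]; exact G.hadd _ h _ h'

theorem Good.mem_of_eq (G : Good S) {a b a' b' : ℝ} (h : aff a b ∈ S) (ha : a' = a) (hb : b' = b) :
    aff a' b' ∈ S := by rw [ha, hb]; exact h

theorem Good.quarter (G : Good S) : aff (1/4) (1/2) ∈ S :=
  G.mem_of_eq (G.comp G.h2 G.h2) (by norm_num) (by norm_num)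

theorem Good.zero2 (G : Good S) : aff 0 2 ∈ S :=
  G.mem_of_eq (G.addm (G.addm G.quarter G.h2) G.quarter) (by norm_num) (by norm_num)

theorem Good.cstep (G : Good S) {c : ℝ} (h : aff 0 c ∈ S) : aff 0 (1 - c/2) ∈ S :=
  G.mem_of_eq (G.comp G.h2 h) (by norm_num) (by ring)

theorem Good.c0 (G : Good S) : aff 0 0 ∈ S := G.mem_of_eq (G.cstep G.zero2) rfl (by norm_num)

theorem Good.c1 (G : Good S) : aff 0 1 ∈ S := G.mem_of_eq (G.cstep G.c0) rfl (by norm_num)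

theorem Good.cnat (G : Good S) : ∀ n : ℕ, aff 0 (n : ℝ) ∈ S := by
  intro n
  induction n with
  | zero => exact G.mem_of_eq G.c0 rfl (by norm_num)
  | succ n ih => exact G.mem_of_eq (G.addm ih G.c1) (by norm_num) (by push_cast; ring)

theorem Good.cint (G : Good S) : ∀ m : ℤ, aff 0 (m : ℝ) ∈ S := by
  intro m
  obtain ⟨n, rfl | rfl⟩ := m.eq_nat_or_neg
  · exact G.mem_of_eq (G.cnat n) rfl (by push_cast; ring)
  · exact G.mem_of_eq (G.cstep (G.cnat (2*n+2))) rfl (by push_cast; ring)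

theorem Good.cdyadic (G : Good S) : ∀ (n : ℕ) (m : ℤ), aff 0 ((m : ℝ)/2^n) ∈ S := by
  intro n
  induction n with
  | zero => intro m; exact G.mem_of_eq (G.cint m) rfl (by norm_num)
  | succ n ih =>
      intro m
      refine G.mem_of_eq (G.cstep (ih (2^(n+1) - m))) rfl ?_
      push_cast
      field_simp
      ring

theorem Good.cany (G : Good S) {c δ : ℝ} (hδ : 0 < δ) : ∃ c', aff 0 c' ∈ S ∧ |c' - c| < δ := by
  obtain ⟨n, hn⟩ := pow_unbounded_of_one_lt (1/δ) (by norm_num : (1:ℝ) < 2)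
  refine ⟨(⌊c * 2^n⌋ : ℝ)/2^n, G.cdyadic n _, ?_⟩
  have h2n : (0:ℝ) < 2^n := by positivity
  rw [abs_sub_lt_iff]
  constructor
  · rw [div_sub' (ne_of_gt h2n), div_lt_iff₀ h2n]
    have := Int.floor_le (c * 2^n)
    nlinarith [mul_pos hδ h2n, (div_lt_iff₀ hδ).mp hn]
  · rw [sub_div' (ne_of_gt h2n), div_lt_iff₀ h2n] at *
    have := Int.lt_floor_add_one (c * 2^n)
    nlinarith [mul_pos hδ h2n, (div_lt_iff₀ hδ).mp hn]

-- slopes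
theorem Good.s8 (G : Good S) : ∃ b, aff (1/8) b ∈ S := by
  -- -1/8 = (-1/2)*(1/4);  1/8 = 1/4 + (-1/8)
  have hm : aff (-(1/8)) (3/4) ∈ S :=
    G.mem_of_eq (G.comp G.h2 G.quarter) (by norm_num) (by norm_num)
  exact ⟨5/4, G.mem_of_eq (G.addm G.quarter hm) (by norm_num) (by norm_num)⟩

theorem Good.sm8 (G : Good S) : ∃ b, aff (-(1/8)) b ∈ S :=
  ⟨3/4, G.mem_of_eq (G.comp G.h2 G.quarter) (by norm_num) (by norm_num)⟩

theorem Good.sint8 (G : Good S) : ∀ k : ℤ, ∃ b, aff ((k:ℝ)/8) b ∈ S := by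
  intro k
  induction k using Int.induction_on with
  | zero => exact ⟨0, G.mem_of_eq G.c0 (by norm_num) rfl⟩
  | succ k ih =>
      obtain ⟨b, hb⟩ := ih
      obtain ⟨b', hb'⟩ := G.s8
      exact ⟨b + b', G.mem_of_eq (G.addm hb hb') (by push_cast; ring) rfl⟩
  | pred k ih =>
      obtain ⟨b, hb⟩ := ih
      obtain ⟨b', hb'⟩ := G.sm8
      exact ⟨b + b', G.mem_of_eq (G.addm hb hb') (by push_cast; ring) rfl⟩

theorem Good.sdyadic (G : Good S) : ∀ (n : ℕ) (k : ℤ), ∃ b, aff ((k:ℝ)/8^n) b ∈ S := by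
  intro n
  induction n with
  | zero =>
      intro k
      obtain ⟨b, hb⟩ := G.sint8 (8*k)
      exact ⟨b, G.mem_of_eq hb (by push_cast; ring) rfl⟩
  | succ n ih =>
      intro k
      obtain ⟨b, hb⟩ := ih k
      obtain ⟨b', hb'⟩ := G.sint8 1
      refine ⟨(1:ℝ)/8 * b + b', G.mem_of_eq (G.comp hb' hb) ?_ (by push_cast; ring)⟩
      push_cast
      rw [pow_succ]
      ring

theorem Good.aff_dense (G : Good S) (a b δ : ℝ) (hδ : 0 < δ) :
    ∃ a' b', aff a' b' ∈ S ∧ |a' - a| < δ ∧ |b' - b| < δ := by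
  obtain ⟨n, hn⟩ := pow_unbounded_of_one_lt (1/δ) (by norm_num : (1:ℝ) < 8)
  obtain ⟨b₀, hb₀⟩ := G.sdyadic n ⌊a * 8^n⌋
  obtain ⟨c, hc, hcd⟩ := G.cany (c := b - b₀) hδ
  refine ⟨(⌊a * 8^n⌋ : ℝ)/8^n, b₀ + c, G.mem_of_eq (G.addm hb₀ hc) (by ring) rfl, ?_, by
    have : b₀ + c - b = c - (b - b₀) := by ring
    rw [this]; exact hcd⟩
  have h8n : (0:ℝ) < 8^n := by positivity
  rw [abs_sub_lt_iff]
  constructor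
  · rw [div_sub' (ne_of_gt h8n), div_lt_iff₀ h8n]
    have := Int.floor_le (a * 8^n)
    nlinarith [mul_pos hδ h8n, (div_lt_iff₀ hδ).mp hn]
  · rw [sub_div' (ne_of_gt h8n), div_lt_iff₀ h8n]
    have := Int.lt_floor_add_one (a * 8^n)
    nlinarith [mul_pos hδ h8n, (div_lt_iff₀ hδ).mp hn]

def Apx (S : Set (ℝ → ℝ)) (f : ℝ → ℝ) : Prop :=
  ∀ K : Set ℝ, IsCompact K → ∀ ε > 0, ∃ F ∈ S, ∀ x ∈ K, |f x - F x| < ε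

theorem aff_cont (a b : ℝ) : Continuous (aff a b) := by
  unfold aff; continuity

theorem apx_congr {S : Set (ℝ → ℝ)} {f g : ℝ → ℝ} (h : ∀ t, f t = g t) (hf : Apx S f) :
    Apx S g := by
  have : f = g := funext h
  rwa [this] at hf

theorem Good.apx_affine (G : Good S) (a b : ℝ) : Apx S (aff a b) := by
  intro K hK ε hε
  obtain ⟨C, hC⟩ := hK.exists_bound_of_continuousOn continuousOn_id
  set M : ℝ := |C| + 1 with hM
  have hM1 : (1:ℝ) ≤ M := by rw [hM]; linarith [abs_nonneg C]
  have hMpos : (0:ℝ) < M := by linarith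
  have hδ : 0 < ε/(2*M) := by positivity
  obtain ⟨a', b', hmem, ha', hb'⟩ := G.aff_dense a b (ε/(2*M)) hδ
  refine ⟨aff a' b', hmem, fun x hx => ?_⟩
  have hxM : |x| ≤ M := by
    have := hC x hx
    simp only [id] at this
    calc |x| = ‖x‖ := rfl
    _ ≤ C := this
    _ ≤ |C| := le_abs_self C
    _ ≤ M := by linarith
  have key : |aff a b x - aff a' b' x| ≤ |a - a'| * |x| + |b - b'| := by
    unfold aff
    calc |a * x + b - (a' * x + b')| = |(a - a') * x + (b - b')| := by ring_nf
    _ ≤ |(a - a') * x| + |b - b'| := abs_add_le _ _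
    _ = |a - a'| * |x| + |b - b'| := by rw [abs_mul]
  have h1 : |a - a'| * |x| ≤ ε/(2*M) * M := by
    apply mul_le_mul (le_of_lt (by rwa [abs_sub_comm])) hxM (abs_nonneg x) (le_of_lt hδ)
  have h2 : ε/(2*M) * M = ε/2 := by field_simp
  have h3 : ε/(2*M) ≤ ε/2 := by
    rw [div_le_div_iff₀ (by positivity) (by norm_num)]
    nlinarith
  calc |aff a b x - aff a' b' x| ≤ |a - a'| * |x| + |b - b'| := key
  _ < ε/2 + ε/2 := by
      apply add_lt_add_of_le_of_lt (by linarith)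
      calc |b - b'| = |b' - b| := abs_sub_comm _ _
      _ < ε/(2*M) := hb'
      _ ≤ ε/2 := h3
  _ = ε := by ring

theorem Good.apx_const (G : Good S) (c : ℝ) : Apx S (fun _ => c) :=
  apx_congr (fun t => by simp [aff]) (G.apx_affine 0 c)

theorem Good.apx_add (G : Good S) {f h : ℝ → ℝ} (hf : Apx S f) (hh : Apx S h) :
    Apx S (fun t => f t + h t) := by
  intro K hK ε hε
  obtain ⟨F, hF, hFe⟩ := hf K hK (ε/2) (by positivity)
  obtain ⟨H, hH, hHe⟩ := hh K hK (ε/2) (by positivity)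
  refine ⟨F + H, G.hadd _ hF _ hH, fun x hx => ?_⟩
  have := abs_add_le (f x - F x) (h x - H x)
  simp only [Pi.add_apply]
  calc |f x + h x - (F x + H x)| = |(f x - F x) + (h x - H x)| := by ring_nf
  _ ≤ |f x - F x| + |h x - H x| := abs_add_le _ _
  _ < ε/2 + ε/2 := add_lt_add (hFe x hx) (hHe x hx)
  _ = ε := by ring

theorem Good.apx_comp (G : Good S) {f h : ℝ → ℝ} (hfc : Continuous f) (hhc : Continuous h)
    (hf : Apx S f) (hh : Apx S h) : Apx S (f ∘ h) := by
  intro K hK ε hε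
  set Kh := h '' K with hKh
  have hKhc : IsCompact Kh := hK.image hhc
  set K' := Metric.cthickening 1 Kh with hK'def
  have hK'c : IsCompact K' := hKhc.cthickening
  have huc : UniformContinuousOn f K' := hK'c.uniformContinuousOn_of_continuous hfc.continuousOn
  rw [Metric.uniformContinuousOn_iff] at huc
  obtain ⟨δ, hδ, hucδ⟩ := huc (ε/2) (by positivity)
  set δ' := min δ 1 with hδ'def
  have hδ' : 0 < δ' := lt_min hδ one_pos
  obtain ⟨H, hH, hHe⟩ := hh K hK δ' hδ'
  obtain ⟨F, hF, hFe⟩ := hf K' hK'c (ε/2) (by positivity)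
  refine ⟨F ∘ H, G.hcomp _ hF _ hH, fun x hx => ?_⟩
  have hhxK' : h x ∈ K' := Metric.self_subset_cthickening _ ⟨x, hx, rfl⟩
  have hHxK' : H x ∈ K' := by
    apply Metric.mem_cthickening_of_dist_le (H x) (h x) 1 Kh ⟨x, hx, rfl⟩
    rw [Real.dist_eq, abs_sub_comm]
    have := hHe x hx
    calc |h x - H x| ≤ δ' := le_of_lt this
    _ ≤ 1 := min_le_right _ _
  have hd : dist (h x) (H x) < δ := by
    rw [Real.dist_eq]
    calc |h x - H x| < δ' := hHe x hx
    _ ≤ δ := min_le_left _ _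
  have h1 : |f (h x) - f (H x)| < ε/2 := by
    have := hucδ (h x) hhxK' (H x) hHxK' hd
    rwa [Real.dist_eq] at this
  have h2 : |f (H x) - F (H x)| < ε/2 := hFe (H x) hHxK'
  calc |(f ∘ h) x - (F ∘ H) x| = |(f (h x) - f (H x)) + (f (H x) - F (H x))| := by
        simp only [Function.comp_apply]; ring_nf
  _ ≤ |f (h x) - f (H x)| + |f (H x) - F (H x)| := abs_add_le _ _
  _ < ε/2 + ε/2 := add_lt_add h1 h2
  _ = ε := by ring

theorem Good.apx_smul (G : Good S) {f : ℝ → ℝ} (c : ℝ) (hfc : Continuous f) (hf : Apx S f) :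
    Apx S (fun t => c * f t) := by
  have := G.apx_comp (aff_cont c 0) hfc (G.apx_affine c 0) hf
  exact apx_congr (fun t => by simp [aff, Function.comp]) this

theorem apx_limit {S : Set (ℝ → ℝ)} {f : ℝ → ℝ}
    (h : ∀ K : Set ℝ, IsCompact K → ∀ ε > 0, ∃ f', Apx S f' ∧ ∀ x ∈ K, |f x - f' x| < ε) :
    Apx S f := by
  intro K hK ε hε
  obtain ⟨f', hf', hfe⟩ := h K hK (ε/2) (by positivity)
  obtain ⟨F, hF, hFe⟩ := hf' K hK (ε/2) (by positivity)
  refine ⟨F, hF, fun x hx => ?_⟩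
  calc |f x - F x| = |(f x - f' x) + (f' x - F x)| := by ring_nf
  _ ≤ |f x - f' x| + |f' x - F x| := abs_add_le _ _
  _ < ε/2 + ε/2 := add_lt_add (hfe x hx) (hFe x hx)
  _ = ε := by ring

theorem Good.apx_sum (G : Good S) {ι : Type} (s : Finset ι) (f : ι → ℝ → ℝ)
    (h : ∀ i ∈ s, Apx S (f i)) : Apx S (fun t => ∑ i ∈ s, f i t) := by
  classical
  induction s using Finset.induction_on with
  | empty => exact apx_congr (fun t => by simp) (G.apx_const 0)
  | @insert a s ha ih =>
      have h1 : Apx S (f a) := h a (Finset.mem_insert_self a s)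
      have h2 : Apx S (fun t => ∑ i ∈ s, f i t) :=
        ih (fun i hi => h i (Finset.mem_insert_of_mem hi))
      exact apx_congr (fun t => by rw [Finset.sum_insert ha]) (G.apx_add h1 h2)

open intervalIntegral in
theorem Good.apx_integral (G : Good S) {g : ℝ → ℝ} (hg : Continuous g) (ag : Apx S g)
    {lam : ℝ} (hlam : 0 < lam) : Apx S (fun t => ∫ s in t..(t+lam), g s) := by
  apply apx_limit
  intro K hK ε hε
  obtain ⟨C, hC⟩ := hK.exists_bound_of_continuousOn continuousOn_id
  set M : ℝ := |C| + 1 with hM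
  have hMpos : (0:ℝ) < M := by rw [hM]; linarith [abs_nonneg C]
  have hxM : ∀ x ∈ K, |x| ≤ M := by
    intro x hx
    have := hC x hx
    simp only [id] at this
    calc |x| = ‖x‖ := rfl
    _ ≤ C := this
    _ ≤ |C| := le_abs_self C
    _ ≤ M := by rw [hM]; linarith
  set Kb := Set.Icc (-(M+lam+1)) (M+lam+1) with hKb
  have hKbc : IsCompact Kb := isCompact_Icc
  have huc : UniformContinuousOn g Kb := hKbc.uniformContinuousOn_of_continuous hg.continuousOn
  rw [Metric.uniformContinuousOn_iff] at huc
  set ε' : ℝ := ε/(2*(lam+1)) with hε'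
  have hε'pos : 0 < ε' := by positivity
  obtain ⟨δ, hδ, hucδ⟩ := huc ε' hε'pos
  obtain ⟨n₀, hn₀⟩ := exists_nat_gt (lam/δ)
  set n : ℕ := n₀ + 1 with hn
  have hnpos : 0 < (n:ℝ) := by positivity
  have hstep : lam/n < δ := by
    rw [div_lt_iff₀ hnpos]
    have h1 : lam/δ < n := by
      rw [hn]; push_cast; linarith
    calc lam = (lam/δ) * δ := by field_simp
    _ < ↑n * δ := mul_lt_mul_of_pos_right h1 hδ
    _ = δ * ↑n := mul_comm _ _
  have hsteppos : 0 < lam/n := by positivity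
  set f' : ℝ → ℝ := fun t => ∑ k ∈ Finset.range n, (lam/n) * g (t + k*(lam/n)) with hf'
  have haf' : Apx S f' := by
    apply G.apx_sum
    intro k _
    have h1 : Apx S (g ∘ aff 1 (k*(lam/n))) :=
      G.apx_comp hg (aff_cont _ _) ag (G.apx_affine 1 (k*(lam/n)))
    have h2 : Apx S (fun t => (lam/n) * (g ∘ aff 1 (k*(lam/n))) t) :=
      G.apx_smul (lam/n) (hg.comp (aff_cont _ _)) h1
    exact apx_congr (fun t => by simp [aff, Function.comp]) h2
  refine ⟨f', haf', fun x hx => ?_⟩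
  -- the partition points
  set a : ℕ → ℝ := fun k => x + k*(lam/n) with ha
  have hmemKb : ∀ s : ℝ, x ≤ s → s ≤ x + lam → s ∈ Kb := by
    intro s h1 h2
    have := hxM x hx
    rw [hKb]
    constructor
    · rw [abs_le] at this; linarith [this.1]
    · rw [abs_le] at this; linarith [this.2]
  have hak_mem : ∀ k : ℕ, k ≤ n → a k ∈ Kb := by
    intro k hk
    apply hmemKb
    · have : (0:ℝ) ≤ k*(lam/n) := by positivity
      rw [ha]; linarith
    · rw [ha]
      have hkn : (k:ℝ) ≤ n := by exact_mod_cast hk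
      have : (k:ℝ)*(lam/n) ≤ n*(lam/n) := by
        apply mul_le_mul_of_nonneg_right hkn (le_of_lt hsteppos)
      have hnl : (n:ℝ)*(lam/n) = lam := by field_simp
      linarith [hnl ▸ this]
  have hsplit : ∫ s in x..(x+lam), g s = ∑ k ∈ Finset.range n, ∫ s in (a k)..(a (k+1)), g s := by
    rw [sum_integral_adjacent_intervals (fun k _ => hg.intervalIntegrable _ _)]
    have h0 : a 0 = x := by rw [ha]; push_cast; ring
    have hn' : a n = x + lam := by
      rw [ha]; field_simp
    rw [h0, hn']
  have hterm : ∀ k ∈ Finset.range n,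
      |(∫ s in (a k)..(a (k+1)), g s) - (lam/n) * g (x + k*(lam/n))| ≤ ε' * (lam/n) := by
    intro k hk
    rw [Finset.mem_range] at hk
    have hstep_eq : a (k+1) - a k = lam/n := by rw [ha]; push_cast; ring
    have hconst : (lam/n) * g (x + k*(lam/n)) = ∫ s in (a k)..(a (k+1)), g (a k) := by
      rw [integral_const, smul_eq_mul, hstep_eq, ha]
    rw [hconst, ← integral_sub (hg.intervalIntegrable _ _) (intervalIntegrable_const)]
    have hbound : ∀ s ∈ Set.uIoc (a k) (a (k+1)), ‖g s - g (a k)‖ ≤ ε' := by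
      intro s hs
      have hord : a k ≤ a (k+1) := by
        have h0 := hsteppos
        rw [← hstep_eq] at h0
        linarith
      rw [Set.uIoc_of_le hord] at hs
      have hsk : a k ≤ s := le_of_lt hs.1
      have hsk1 : s ≤ a (k+1) := hs.2
      have hakKb : a k ∈ Kb := hak_mem k (le_of_lt hk)
      have hsKb : s ∈ Kb := by
        apply hmemKb
        · have : x ≤ a k := by
            rw [ha]; have : (0:ℝ) ≤ k*(lam/n) := by positivity
            linarith
          linarith
        · have hk1 : a (k+1) ∈ Kb := hak_mem (k+1) hk
          have : a (k+1) ≤ x + lam := by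
            have hkn : (((k+1:ℕ)):ℝ) ≤ (n:ℝ) := by exact_mod_cast hk
            have h1 : (((k+1:ℕ)):ℝ)*(lam/n) ≤ (n:ℝ)*(lam/n) :=
              mul_le_mul_of_nonneg_right hkn (le_of_lt hsteppos)
            have h2 : (n:ℝ)*(lam/n) = lam := by field_simp
            simp only [ha]
            linarith
          linarith
      have hdist : dist s (a k) < δ := by
        rw [Real.dist_eq, abs_of_nonneg (by linarith : (0:ℝ) ≤ s - a k)]
        calc s - a k ≤ a (k+1) - a k := by linarith
        _ = lam/n := hstep_eq
        _ < δ := hstep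
      have := hucδ s hsKb (a k) hakKb hdist
      rw [Real.dist_eq] at this
      exact le_of_lt this
    have := norm_integral_le_of_norm_le_const hbound
    rw [hstep_eq] at this
    calc |∫ s in (a k)..(a (k+1)), (g s - g (a k))| ≤ ε' * |lam/n| := this
    _ = ε' * (lam/n) := by rw [abs_of_pos hsteppos]
  calc |(∫ s in x..(x+lam), g s) - f' x|
      = |∑ k ∈ Finset.range n, ((∫ s in (a k)..(a (k+1)), g s) - (lam/n) * g (x + k*(lam/n)))| := by
        rw [hsplit, hf', ← Finset.sum_sub_distrib]
  _ ≤ ∑ k ∈ Finset.range n, |(∫ s in (a k)..(a (k+1)), g s) - (lam/n) * g (x + k*(lam/n))| :=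
        Finset.abs_sum_le_sum_abs _ _
  _ ≤ ∑ _k ∈ Finset.range n, ε' * (lam/n) := Finset.sum_le_sum hterm
  _ = n * (ε' * (lam/n)) := by rw [Finset.sum_const, Finset.card_range, nsmul_eq_mul]
  _ = ε' * ((n:ℝ)*(lam/n)) := by ring
  _ = ε' * lam := by
      have h2 : (n:ℝ)*(lam/n) = lam := by field_simp
      rw [h2]
  _ < ε := by
      rw [hε']
      rw [div_mul_eq_mul_div, div_lt_iff₀ (by positivity)]
      nlinarith

theorem exists_secdiff_ne {g : ℝ → ℝ} (hg : Continuous g)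
    (hna : ¬ ∃ a b : ℝ, g = fun t => a * t + b) :
    ∃ x lam : ℝ, 0 < lam ∧ g (x + lam + lam) - 2 * g (x + lam) + g x ≠ 0 := by
  by_contra hcon
  push_neg at hcon
  have hmid : ∀ x y : ℝ, g x + g y = 2 * g ((x+y)/2) := by
    have key : ∀ x y : ℝ, x < y → g x + g y = 2 * g ((x+y)/2) := by
      intro x y hxy
      have hlam : 0 < (y - x)/2 := by linarith
      have h0 := hcon x ((y-x)/2) hlam
      have e1 : x + (y-x)/2 + (y-x)/2 = y := by ring
      have e2 : x + (y-x)/2 = (x+y)/2 := by ring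
      rw [e1, e2] at h0
      linarith
    intro x y
    rcases lt_trichotomy x y with h | h | h
    · exact key x y h
    · subst h; ring_nf
    · have := key y x h
      rw [add_comm y x] at this
      linarith
  set φ : ℝ → ℝ := fun t => g t - g 0 with hφ
  have hφ0 : φ 0 = 0 := by simp [hφ]
  have hmp : ∀ a b : ℝ, midpoint ℝ a b = (a+b)/2 := by
    intro a b
    rw [midpoint_eq_smul_add, smul_eq_mul]
    norm_num
    ring
  have hφmid : ∀ x y : ℝ, φ (midpoint ℝ x y) = midpoint ℝ (φ x) (φ y) := by
    intro x y
    rw [hmp, hmp]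
    simp only [hφ]
    have := hmid x y
    linarith
  set F := AddMonoidHom.ofMapMidpoint ℝ ℝ φ hφ0 hφmid with hF
  have hφcont : Continuous φ := by
    simp only [hφ]; exact hg.sub continuous_const
  have hFφ : ∀ t, F t = φ t := fun t => rfl
  set Flin := F.toRealLinearMap hφcont with hFlin
  have hFlinφ : ∀ t, Flin t = φ t := fun t => rfl
  have hlin : ∀ t : ℝ, φ t = t * φ 1 := by
    intro t
    have h1 : Flin t = Flin (t • (1:ℝ)) := by norm_num
    rw [← hFlinφ t, h1, Flin.map_smul, smul_eq_mul, hFlinφ 1]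
  apply hna
  refine ⟨φ 1, g 0, funext fun t => ?_⟩
  have := hlin t
  simp only [hφ] at this
  have hφ1 : φ 1 = g 1 - g 0 := rfl
  rw [hφ1]
  linarith

def Ig (g : ℝ → ℝ) (lam : ℝ) : ℝ → ℝ := fun t => ∫ s in t..(t+lam), g s

theorem Ig_hasDeriv {g : ℝ → ℝ} (hg : Continuous g) (lam : ℝ) (t : ℝ) :
    HasDerivAt (Ig g lam) (g (t + lam) - g t) t := by
  have hA : ∀ u : ℝ, HasDerivAt (fun v => ∫ s in (0:ℝ)..v, g s) (g u) u := fun u =>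
    intervalIntegral.integral_hasDerivAt_right (hg.intervalIntegrable _ _)
      (hg.stronglyMeasurableAtFilter _ _) hg.continuousAt
  have heq : Ig g lam = fun u => (∫ s in (0:ℝ)..(u+lam), g s) - ∫ s in (0:ℝ)..u, g s := by
    funext u
    rw [Ig, eq_sub_iff_add_eq, add_comm]
    exact intervalIntegral.integral_add_adjacent_intervals
      (hg.intervalIntegrable _ _) (hg.intervalIntegrable _ _)
  rw [heq]
  have h1 : HasDerivAt (fun u : ℝ => ∫ s in (0:ℝ)..(u+lam), g s) (g (t+lam)) t := by
    have := (hA (t+lam)).comp t ((hasDerivAt_id t).add_const lam)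
    simpa [Function.comp_def] using this
  exact h1.sub (hA t)

theorem Ig_cont {g : ℝ → ℝ} (hg : Continuous g) (lam : ℝ) : Continuous (Ig g lam) :=
  continuous_iff_continuousAt.mpr fun t => (Ig_hasDeriv hg lam t).continuousAt

theorem calc_eps1 (ε0 cc e t : ℝ) (hc : cc ≠ 0) (he : e ≠ 0) :
    (2 / (cc * e^2)) * (ε0 * (e*t)^2) = 2 * ε0 * t^2 / cc := by
  field_simp

theorem calc_eps2 (ε cc m : ℝ) (hc : cc ≠ 0) (hm : m ≠ 0) :
    2 * (ε * cc / (4 * m^2)) * m^2 / cc = ε / 2 := by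
  field_simp
  ring

set_option maxHeartbeats 1000000 in
open intervalIntegral in
theorem Good.apx_sq (G : Good S) {g : ℝ → ℝ} (hg : Continuous g)
    (hna : ¬ ∃ a b : ℝ, g = fun t => a * t + b) (ag : Apx S g) :
    Apx S (fun t => t^2) := by
  obtain ⟨x, lam, hlam, hc⟩ := exists_secdiff_ne hg hna
  set c : ℝ := g (x + lam + lam) - 2 * g (x + lam) + g x with hcdef
  have hcabs : 0 < |c| := abs_pos.mpr hc
  set G₁ : ℝ → ℝ := Ig g lam with hG₁
  have hG₁c : Continuous G₁ := Ig_cont hg lam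
  set G₂ : ℝ → ℝ := Ig G₁ lam with hG₂
  have hG₂c : Continuous G₂ := Ig_cont hG₁c lam
  have apxG₁ : Apx S G₁ := G.apx_integral hg ag hlam
  have apxG₂ : Apx S G₂ := G.apx_integral hG₁c apxG₁ hlam
  set D : ℝ → ℝ := fun t => G₁ (t + lam) - G₁ t with hD
  set H : ℝ → ℝ := fun t => g (t + lam + lam) - 2 * g (t + lam) + g t with hH
  have hHc : Continuous H := by
    apply Continuous.add
    apply Continuous.sub
    · exact hg.comp (by continuity)
    · exact (continuous_const.mul (hg.comp (by continuity)))
    · exact hg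
  have hHx : H x = c := rfl
  have hG₂d : ∀ t, HasDerivAt G₂ (D t) t := fun t => Ig_hasDeriv hG₁c lam t
  have hDd : ∀ t, HasDerivAt D (H t) t := by
    intro t
    have hG1d : ∀ u, HasDerivAt G₁ (g (u + lam) - g u) u := fun u => Ig_hasDeriv hg lam u
    have h1 : HasDerivAt (fun u => G₁ (u + lam)) (g (t + lam + lam) - g (t + lam)) t := by
      have := (hG1d (t + lam)).comp t ((hasDerivAt_id t).add_const lam)
      simpa [Function.comp_def] using this
    have h2 : HasDerivAt D (g (t + lam + lam) - g (t + lam) - (g (t + lam) - g t)) t :=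
      h1.sub (hG1d t)
    convert h2 using 1
    simp only [hH]
    ring
  have hDc : Continuous D := continuous_iff_continuousAt.mpr fun t => (hDd t).continuousAt
  -- now the approximation
  apply apx_limit
  intro K hK ε hε
  obtain ⟨C, hCb⟩ := hK.exists_bound_of_continuousOn continuousOn_id
  set M : ℝ := |C| + 1 with hM
  have hMpos : (0:ℝ) < M := by rw [hM]; linarith [abs_nonneg C]
  have hM1 : (1:ℝ) ≤ M := by rw [hM]; linarith [abs_nonneg C]
  have hxM : ∀ t ∈ K, |t| ≤ M := by
    intro t ht
    have := hCb t ht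
    simp only [id] at this
    calc |t| = ‖t‖ := rfl
    _ ≤ C := this
    _ ≤ |C| := le_abs_self C
    _ ≤ M := by rw [hM]; linarith
  set ε0 : ℝ := ε * |c| / (4 * M^2) with hε0
  have hε0pos : 0 < ε0 := by positivity
  -- continuity of H at x
  have hHcx : ContinuousAt H x := hHc.continuousAt
  rw [Metric.continuousAt_iff] at hHcx
  obtain ⟨η, hη, hηH⟩ := hHcx ε0 hε0pos
  set η' : ℝ := η/2 with hη'
  have hη'pos : 0 < η' := by positivity
  have hHclose : ∀ v : ℝ, |v| ≤ η' → |H (x + v) - c| ≤ ε0 := by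
    intro v hv
    have : dist (x + v) x < η := by
      rw [Real.dist_eq]
      have : |x + v - x| = |v| := by ring_nf
      rw [this]
      linarith
    have := hηH this
    rw [Real.dist_eq, hHx] at this
    exact le_of_lt this
  set e : ℝ := η' / (2 * M) with he
  have hepos : 0 < e := by positivity
  -- step A
  have stepA : ∀ u : ℝ, |u| ≤ η' → |D (x + u) - D x - u * c| ≤ ε0 * |u| := by
    intro u hu
    have hftc : D (x + u) - D x = ∫ v in (0:ℝ)..u, H (x + v) := by
      have hderiv : ∀ v ∈ Set.uIcc (0:ℝ) u, HasDerivAt (fun w => D (x + w)) (H (x + v)) v := by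
        intro v _
        have := (hDd (x + v)).comp v ((hasDerivAt_id v).const_add x)
        simpa [Function.comp_def] using this
      have hint : IntervalIntegrable (fun v => H (x + v)) MeasureTheory.volume 0 u :=
        Continuous.intervalIntegrable (by fun_prop) _ _
      have := intervalIntegral.integral_eq_sub_of_hasDerivAt hderiv hint
      rw [this]
      simp
    have hconst : (∫ _v in (0:ℝ)..u, c) = u * c := by
      rw [intervalIntegral.integral_const, smul_eq_mul, sub_zero]
    have hsub : D (x + u) - D x - u * c = ∫ v in (0:ℝ)..u, (H (x + v) - c) := by
      have hint1 : IntervalIntegrable (fun v => H (x + v)) MeasureTheory.volume 0 u :=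
        Continuous.intervalIntegrable (by fun_prop) _ _
      have hint2 : IntervalIntegrable (fun _v : ℝ => c) MeasureTheory.volume 0 u :=
        intervalIntegrable_const
      rw [intervalIntegral.integral_sub hint1 hint2, ← hftc, hconst]
    rw [hsub]
    have hbd : ∀ v ∈ Set.uIoc (0:ℝ) u, ‖H (x + v) - c‖ ≤ ε0 := by
      intro v hv
      apply hHclose
      rcases Set.mem_uIoc.mp hv with h | h
      · have : 0 < v ∧ v ≤ u := ⟨h.1, h.2⟩
        rw [abs_of_pos this.1]
        calc v ≤ u := this.2
        _ ≤ |u| := le_abs_self u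
        _ ≤ η' := hu
      · have : u < v ∧ v ≤ 0 := ⟨h.1, h.2⟩
        rw [abs_of_nonpos this.2]
        calc -v ≤ -u := by linarith
        _ ≤ |u| := neg_le_abs u
        _ ≤ η' := hu
    have := intervalIntegral.norm_integral_le_of_norm_le_const hbd
    rwa [sub_zero] at this
  -- step B
  have stepB : ∀ s : ℝ, |s| ≤ η' →
      |G₂ (x + s) - G₂ x - s * D x - c * s^2 / 2| ≤ ε0 * s^2 := by
    intro s hs
    have hftc : G₂ (x + s) - G₂ x - s * D x = ∫ u in (0:ℝ)..s, (D (x + u) - D x) := by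
      have hderiv : ∀ u ∈ Set.uIcc (0:ℝ) s,
          HasDerivAt (fun w => G₂ (x + w) - w * D x) (D (x + u) - D x) u := by
        intro u _
        have h1 : HasDerivAt (fun w => G₂ (x + w)) (D (x + u)) u := by
          have := (hG₂d (x + u)).comp u ((hasDerivAt_id u).const_add x)
          simpa [Function.comp_def] using this
        have h2 : HasDerivAt (fun w : ℝ => w * D x) (D x) u := by
          simpa using (hasDerivAt_id u).mul_const (D x)
        exact h1.sub h2
      have hint : IntervalIntegrable (fun u => D (x + u) - D x) MeasureTheory.volume 0 s :=
        Continuous.intervalIntegrable (by fun_prop) _ _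
      have := intervalIntegral.integral_eq_sub_of_hasDerivAt hderiv hint
      rw [this]
      simp only [add_zero, zero_mul, sub_zero]
      ring
    have hid : (∫ u in (0:ℝ)..s, c * u) = c * s^2 / 2 := by
      rw [integral_const_mul, integral_id]
      ring
    have hsub : G₂ (x + s) - G₂ x - s * D x - c * s^2 / 2
        = ∫ u in (0:ℝ)..s, (D (x + u) - D x - c * u) := by
      have hint1 : IntervalIntegrable (fun u => D (x + u) - D x) MeasureTheory.volume 0 s :=
        Continuous.intervalIntegrable (by fun_prop) _ _
      have hint2 : IntervalIntegrable (fun u : ℝ => c * u) MeasureTheory.volume 0 s :=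
        Continuous.intervalIntegrable (by fun_prop) _ _
      rw [intervalIntegral.integral_sub hint1 hint2, ← hftc, hid]
    rw [hsub]
    have hbd : ∀ u ∈ Set.uIoc (0:ℝ) s, ‖D (x + u) - D x - c * u‖ ≤ ε0 * |s| := by
      intro u hu
      have huabs : |u| ≤ |s| := by
        rcases Set.mem_uIoc.mp hu with h | h
        · rw [abs_of_pos h.1]
          calc u ≤ s := h.2
          _ ≤ |s| := le_abs_self s
        · rw [abs_of_nonpos h.2]
          calc -u ≤ -s := by linarith [h.1]
          _ ≤ |s| := neg_le_abs s
      have h1 : |D (x + u) - D x - u * c| ≤ ε0 * |u| := stepA u (le_trans huabs hs)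
      calc ‖D (x + u) - D x - c * u‖ = |D (x + u) - D x - u * c| := by rw [Real.norm_eq_abs]; ring_nf
      _ ≤ ε0 * |u| := h1
      _ ≤ ε0 * |s| := by nlinarith
    have := intervalIntegral.norm_integral_le_of_norm_le_const hbd
    rw [sub_zero] at this
    calc |∫ u in (0:ℝ)..s, (D (x + u) - D x - c * u)| ≤ ε0 * |s| * |s| := this
    _ = ε0 * s^2 := by
        rw [mul_assoc, ← abs_mul, abs_of_nonneg (mul_self_nonneg s)]
        ring
  -- the approximating function
  set a1 : ℝ := 2 / (c * e^2) with ha1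
  set f' : ℝ → ℝ := fun t => a1 * (G₂ (x + e * t) - G₂ x - e * t * D x) with hf'
  have hapxf' : Apx S f' := by
    have hin : Apx S (G₂ ∘ aff e x) :=
      G.apx_comp hG₂c (aff_cont e x) apxG₂ (G.apx_affine e x)
    have hinc : Continuous (G₂ ∘ aff e x) := hG₂c.comp (aff_cont e x)
    have hsc : Apx S (fun t => a1 * (G₂ ∘ aff e x) t) := G.apx_smul a1 hinc hin
    have haf : Apx S (aff (-(a1 * e * D x)) (-(a1 * G₂ x))) :=
      G.apx_affine _ _
    have := G.apx_add hsc haf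
    apply apx_congr (f := fun t => a1 * (G₂ ∘ aff e x) t + aff (-(a1 * e * D x)) (-(a1 * G₂ x)) t)
      (fun t => by simp only [Function.comp_apply, aff, hf']; ring) this
  refine ⟨f', hapxf', fun t ht => ?_⟩
  have htM : |t| ≤ M := hxM t ht
  have hetabs : |e * t| ≤ η' := by
    rw [abs_mul, abs_of_pos hepos]
    calc e * |t| ≤ e * M := by nlinarith
    _ = η' / 2 := by rw [he]; field_simp
    _ ≤ η' := by linarith
  have hB := stepB (e * t) hetabs
  have hce2 : c * e^2 ≠ 0 := by
    apply mul_ne_zero hc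
    positivity
  have hkey : (fun t => t^2) t - f' t = -a1 * (G₂ (x + e*t) - G₂ x - e*t*D x - c * (e*t)^2/2) := by
    simp only [hf', ha1]
    field_simp
    ring
  rw [hkey]
  have ha1abs : |(-a1)| = 2 / (|c| * e^2) := by
    rw [abs_neg, ha1, abs_div, abs_mul]
    congr 1
    · norm_num
    · congr 1
      rw [abs_of_pos (by positivity : (0:ℝ) < e^2)]
  calc |(-a1) * (G₂ (x + e*t) - G₂ x - e*t*D x - c * (e*t)^2/2)|
      = |(-a1)| * |G₂ (x + e*t) - G₂ x - e*t*D x - c * (e*t)^2/2| := abs_mul _ _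
  _ ≤ (2 / (|c| * e^2)) * (ε0 * (e*t)^2) := by
      rw [ha1abs]
      apply mul_le_mul_of_nonneg_left hB (by positivity)
  _ = 2 * ε0 * t^2 / |c| := calc_eps1 ε0 |c| e t (ne_of_gt hcabs) (ne_of_gt hepos)
  _ ≤ 2 * ε0 * M^2 / |c| := by
      have h2 : t^2 ≤ M^2 := by nlinarith [abs_nonneg t, sq_abs t]
      gcongr
  _ = ε / 2 := by rw [hε0]; exact calc_eps2 ε |c| M (ne_of_gt hcabs) (ne_of_gt hMpos)
  _ < ε := by linarith

theorem Good.apx_mul (G : Good S) {f h : ℝ → ℝ} (hfc : Continuous f) (hhc : Continuous h)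
    (hsq : Apx S (fun t => t^2)) (hf : Apx S f) (hh : Apx S h) :
    Apx S (fun t => f t * h t) := by
  have hsqc : Continuous (fun t : ℝ => t^2) := by continuity
  have h1 : Apx S ((fun t => t^2) ∘ (fun t => f t + h t)) :=
    G.apx_comp hsqc (hfc.add hhc) hsq (G.apx_add hf hh)
  have h2 : Apx S ((fun t => t^2) ∘ f) := G.apx_comp hsqc hfc hsq hf
  have h3 : Apx S ((fun t => t^2) ∘ h) := G.apx_comp hsqc hhc hsq hh
  have c1 := G.apx_smul (1/2) (hsqc.comp (hfc.add hhc)) h1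
  have c2 := G.apx_smul (-(1/2)) (hsqc.comp hfc) h2
  have c3 := G.apx_smul (-(1/2)) (hsqc.comp hhc) h3
  have call := G.apx_add c1 (G.apx_add c2 c3)
  exact apx_congr (fun t => by simp only [Function.comp_apply, Pi.add_apply]; ring) call

theorem Good.apx_poly (G : Good S) (hsq : Apx S (fun t => t^2)) (p : Polynomial ℝ) :
    Apx S (fun t => p.eval t) := by
  induction p using Polynomial.induction_on with
  | C a => exact apx_congr (fun t => by simp) (G.apx_const a)
  | add p q hp hq =>
      exact apx_congr (fun t => by simp) (G.apx_add hp hq)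
  | monomial n a ih =>
      have hx : Apx S (fun t : ℝ => t) := apx_congr (fun t => by simp [aff]) (G.apx_affine 1 0)
      have hc : Continuous (fun t : ℝ => Polynomial.eval t (Polynomial.C a * Polynomial.X ^ n)) :=
        Polynomial.continuous _
      have := G.apx_mul hc continuous_id hsq ih hx
      exact apx_congr (fun t => by simp; ring) this

theorem Good.apx_cont (G : Good S) (hsq : Apx S (fun t => t^2)) {f : ℝ → ℝ}
    (hf : Continuous f) : Apx S f := by
  apply apx_limit
  intro K hK ε hε
  obtain ⟨C, hCb⟩ := hK.exists_bound_of_continuousOn continuousOn_id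
  set M : ℝ := |C| + 1 with hM
  have hKicc : K ⊆ Set.Icc (-M) M := by
    intro x hx
    have := hCb x hx
    simp only [id] at this
    have hxM : |x| ≤ M := by
      calc |x| = ‖x‖ := rfl
      _ ≤ C := this
      _ ≤ |C| := le_abs_self C
      _ ≤ M := by rw [hM]; linarith
    rw [abs_le] at hxM
    exact ⟨hxM.1, hxM.2⟩
  obtain ⟨p, hp⟩ := exists_polynomial_near_of_continuousOn (-M) M f hf.continuousOn ε hε
  exact ⟨fun t => p.eval t, G.apx_poly hsq p, fun x hx => by
    rw [abs_sub_comm]; exact hp x (hKicc hx)⟩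

end
end S12

set_option maxHeartbeats 1000000 in
theorem stmt12 (g₁ : ℝ → ℝ) (hg₁c : Continuous g₁)
    (hg₁na : ¬ ∃ a b : ℝ, g₁ = fun t => a * t + b)
    (S : Set (ℝ → ℝ))
    (hS₁ : g₁ ∈ S) (hS₂ : (fun t : ℝ => 1 - t / 2) ∈ S)
    (hadd : ∀ f ∈ S, ∀ h ∈ S, (f + h) ∈ S)
    (hcomp : ∀ f ∈ S, ∀ h ∈ S, (f ∘ h) ∈ S)
    (hmin : ∀ T : Set (ℝ → ℝ), g₁ ∈ T → (fun t : ℝ => 1 - t / 2) ∈ T →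
      (∀ f ∈ T, ∀ h ∈ T, (f + h) ∈ T) →
      (∀ f ∈ T, ∀ h ∈ T, (f ∘ h) ∈ T) → S ⊆ T) :
    ∀ K : Set ℝ, IsCompact K → ∀ f : ℝ → ℝ, ContinuousOn f K →
      ∀ ε > 0, ∃ F ∈ S, ∀ x ∈ K, |f x - F x| < ε := by
  intro K hK f hf ε hε
  have hg2c : Continuous (fun t : ℝ => 1 - t / 2) :=
    continuous_const.sub (continuous_id.div_const 2)
  have hScont : ∀ g ∈ S, Continuous g := by
    intro g hgS
    have hsub := hmin {u : ℝ → ℝ | Continuous u} hg₁c hg2c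
      (fun a ha b hb => Continuous.add ha hb)
      (fun a ha b hb => Continuous.comp ha hb)
    exact hsub hgS
  have haff2 : S12.aff (-(1/2)) 1 ∈ S := by
    have : S12.aff (-(1/2)) 1 = (fun t : ℝ => 1 - t / 2) := by
      funext t; simp only [S12.aff]; ring
    rwa [this]
  have G : S12.Good S := ⟨haff2, hadd, hcomp, hScont⟩
  have hg₁apx : S12.Apx S g₁ := by
    intro K' hK' ε' hε'
    exact ⟨g₁, hS₁, fun x _ => by simpa using hε'⟩
  have hsq : S12.Apx S (fun t => t^2) := G.apx_sq hg₁c hg₁na hg₁apx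
  -- Tietze extension of f
  have hKc : IsClosed K := hK.isClosed
  let fK : C(K, ℝ) := ⟨K.restrict f, continuousOn_iff_continuous_restrict.mp hf⟩
  obtain ⟨fe, hfe⟩ := ContinuousMap.exists_restrict_eq hKc fK
  have hfeq : ∀ x (hx : x ∈ K), fe x = f x := by
    intro x hx
    have := ContinuousMap.congr_fun hfe ⟨x, hx⟩
    exact this
  have hapx : S12.Apx S fe := G.apx_cont hsq fe.continuous
  obtain ⟨F, hFS, hFe⟩ := hapx K hK ε hε
  exact ⟨F, hFS, fun x hx => by rw [← hfeq x hx]; exact hFe x hx⟩
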